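/- arXiv:1901.09964 — 3 statements merged into one kernel-verified Lean document; each statement's English description precedes it below -/
import Mathlib

section
/- Suppose p ∈ [1,∞), K ∈ (0,∞), 0 < λ < 1, and α > 0. Then there exist N > 0 and a nonnegative measurable function f ∈ X^p satisfying 0 ≤ f ≤ K·(J_α f)^λ almost everywhere in ℝⁿ×ℝ and f = 0 almost everywhere in ℝⁿ×(−∞,0), such that f(x,t) ≥ K^{1/(1−λ)}·(N t^α)^{λ/(1−λ)} and J_α f(x,t) ≥ K^{1/(1−λ)}·(N t^α)^{1/(1−λ)} for all (x,t) with |x|² < t. -/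
open MeasureTheory Real ENNReal

noncomputable section

/-- The kernel `Φ_α(x,t) = (t^{α-1}/Γ(α)) (4πt)^{-n/2} e^{-|x|²/(4t)}` for `t > 0`, `0` otherwise. -/
def Phi (n : ℕ) (α : ℝ) (x : EuclideanSpace ℝ (Fin n)) (t : ℝ) : ℝ :=
  if 0 < t then
    t ^ (α - 1) / Real.Gamma α * (4 * Real.pi * t) ^ (-(n : ℝ) / 2) *
      Real.exp (-‖x‖ ^ 2 / (4 * t))
  else 0

/-- `(J_α f)(x,t) = ∬ Φ_α(x-ξ, t-τ) f(ξ,τ) dξ dτ` (Bochner integral). -/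
def J (n : ℕ) (α : ℝ) (f : EuclideanSpace ℝ (Fin n) × ℝ → ℝ)
    (z : EuclideanSpace ℝ (Fin n) × ℝ) : ℝ :=
  ∫ w : EuclideanSpace ℝ (Fin n) × ℝ, Phi n α (z.1 - w.1) (z.2 - w.2) * f w

/-- `J_α f` as an `[0,∞]`-valued integral (used for nonnegative `f`). -/
def JE (n : ℕ) (α : ℝ) (f : EuclideanSpace ℝ (Fin n) × ℝ → ℝ)
    (z : EuclideanSpace ℝ (Fin n) × ℝ) : ℝ≥0∞ :=
  ∫⁻ w : EuclideanSpace ℝ (Fin n) × ℝ,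
    ENNReal.ofReal (Phi n α (z.1 - w.1) (z.2 - w.2) * f w)

/-- `f ∈ X^p` : `‖f‖_{L^p(ℝⁿ×(-∞,T))} < ∞`  for every `T ∈ ℝ`. -/
def MemXp (n : ℕ) (p : ℝ≥0∞) (f : EuclideanSpace ℝ (Fin n) × ℝ → ℝ) : Prop :=
  ∀ T : ℝ, MemLp f p (volume.restrict {z : EuclideanSpace ℝ (Fin n) × ℝ | z.2 < T})

/-- Condition (2.12): either `p > 1` and `0 < α < (n+2)/(2p)`, or `p = 1` and `0 < α ≤ (n+2)/2`. -/
def Cond (n : ℕ) (p α : ℝ) : Prop :=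
  (1 < p ∧ 0 < α ∧ α < (n + 2) / (2 * p)) ∨ (p = 1 ∧ 0 < α ∧ α ≤ (n + 2) / 2)

end

noncomputable section Aux

/-- The profile function `ε t^γ` on the paraboloid `{|x|² < t}`. -/
def fct (n : ℕ) (ε γ : ℝ) (z : EuclideanSpace ℝ (Fin n) × ℝ) : ℝ :=
  if 0 < z.2 ∧ ‖z.1‖ ^ 2 < z.2 then ε * z.2 ^ γ else 0

def mal (α : ℝ) : ℝ := min ((2:ℝ) ^ (1 - α)) 1

def vpi (n : ℕ) : ℝ := Real.sqrt Real.pi ^ n / Real.Gamma ((n : ℝ) / 2 + 1)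

def c2 (n : ℕ) (α γ : ℝ) : ℝ :=
  mal α / Real.Gamma α * Real.exp (-(9/8)) * (4:ℝ) ^ (-γ) *
    (4 * Real.pi) ^ (-(n : ℝ) / 2) * (4:ℝ) ^ (-((n:ℝ)/2)) * vpi n * (1/4)

lemma mal_pos (α : ℝ) : 0 < mal α := lt_min (by positivity) one_pos

lemma vpi_pos (n : ℕ) : 0 < vpi n :=
  div_pos (by positivity) (Real.Gamma_pos_of_pos (by positivity))

lemma c2_pos (n : ℕ) {α : ℝ} (γ : ℝ) (hα : 0 < α) : 0 < c2 n α γ := by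
  have h1 := mal_pos α
  have h2 := Real.Gamma_pos_of_pos hα
  have h3 := vpi_pos n
  unfold c2
  refine mul_pos (mul_pos (mul_pos (mul_pos (mul_pos (mul_pos (div_pos h1 h2)
    (Real.exp_pos _)) (by positivity)) (by positivity)) (by positivity)) h3) (by norm_num)

lemma fct_meas (n : ℕ) (ε : ℝ) {γ : ℝ} (hγ : 0 ≤ γ) : Measurable (fct n ε γ) := by
  unfold fct
  refine Measurable.ite ?_ ?_ measurable_const
  · exact (measurableSet_lt measurable_const measurable_snd).inter
      (measurableSet_lt ((measurable_fst.norm).pow_const 2) measurable_snd)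
  · exact measurable_const.mul
      ((Real.continuous_rpow_const hγ).measurable.comp measurable_snd)

lemma fct_nonneg (n : ℕ) {ε : ℝ} (hε : 0 ≤ ε) (γ : ℝ)
    (z : EuclideanSpace ℝ (Fin n) × ℝ) : 0 ≤ fct n ε γ z := by
  unfold fct
  split_ifs with h
  · exact mul_nonneg hε (Real.rpow_nonneg h.1.le _)
  · exact le_refl 0

set_option maxHeartbeats 1600000 in
lemma JE_lower (n : ℕ) (hn : 1 ≤ n) (α γ ε : ℝ) (hα : 0 < α) (hγ : 0 < γ) (hε : 0 ≤ ε)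
    (z : EuclideanSpace ℝ (Fin n) × ℝ) (hz : ‖z.1‖ ^ 2 < z.2) :
    ENNReal.ofReal (ε * c2 n α γ * z.2 ^ (α + γ)) ≤ JE n α (fct n ε γ) z := by
  haveI : Nonempty (Fin n) := ⟨⟨0, hn⟩⟩
  obtain ⟨x, t⟩ := z
  dsimp only at hz ⊢
  have ht : 0 < t := lt_of_le_of_lt (by positivity) hz
  have ht4 : (0:ℝ) < t/4 := by linarith
  have hGa := Real.Gamma_pos_of_pos hα
  set Lo : ℝ := t^(α-1) * mal α / Real.Gamma α * (4*Real.pi*t) ^ (-(n:ℝ)/2) *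
      Real.exp (-(9/8)) * (ε * (t/4)^γ) with hLodef
  have hLo_nonneg : 0 ≤ Lo := by
    refine mul_nonneg (mul_nonneg (mul_nonneg (div_nonneg (mul_nonneg
      (Real.rpow_nonneg ht.le _) (mal_pos α).le) hGa.le) (Real.rpow_nonneg (by positivity) _))
      (Real.exp_pos _).le) (mul_nonneg hε (Real.rpow_nonneg ht4.le _))
  set A : Set (EuclideanSpace ℝ (Fin n) × ℝ) :=
    (Metric.ball (0 : EuclideanSpace ℝ (Fin n)) (Real.sqrt (t/4))) ×ˢ Set.Ioo (t/4) (t/2)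
    with hAdef
  have hAmeas : MeasurableSet A := measurableSet_ball.prod measurableSet_Ioo
  have hvol : volume A = ENNReal.ofReal (Real.sqrt (t/4) ^ n * vpi n * (t/4)) := by
    rw [hAdef, MeasureTheory.Measure.volume_eq_prod, MeasureTheory.Measure.prod_prod,
      EuclideanSpace.volume_ball, Real.volume_Ioo, Fintype.card_fin,
      show t/2 - t/4 = t/4 by ring, ← ENNReal.ofReal_pow (Real.sqrt_nonneg _),
      ← ENNReal.ofReal_mul (by positivity), ← ENNReal.ofReal_mul (by positivity)]
    rfl
  have hs4 : Real.sqrt (t/4) ^ n = t ^ ((n:ℝ)/2) * (4:ℝ) ^ (-((n:ℝ)/2)) := by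
    rw [Real.sqrt_eq_rpow, ← Real.rpow_natCast ((t/4) ^ ((1:ℝ)/2)) n,
      ← Real.rpow_mul ht4.le, show (1:ℝ)/2 * (n:ℝ) = (n:ℝ)/2 by ring,
      Real.div_rpow ht.le (by norm_num : (0:ℝ) ≤ 4),
      Real.rpow_neg (by norm_num : (0:ℝ) ≤ 4), div_eq_mul_inv]
  have h4pit : (4*Real.pi*t) ^ (-(n:ℝ)/2) = (4*Real.pi) ^ (-(n:ℝ)/2) * t ^ (-(n:ℝ)/2) :=
    Real.mul_rpow (by positivity) ht.le
  have ht4γ : ((t/4):ℝ) ^ γ = t ^ γ * (4:ℝ)^(-γ) := by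
    rw [Real.div_rpow ht.le (by norm_num : (0:ℝ) ≤ 4),
      Real.rpow_neg (by norm_num : (0:ℝ) ≤ 4), div_eq_mul_inv]
  have hpow : t ^ (α + γ) = t^γ * t^(α-1) * t^(-(n:ℝ)/2) * t^((n:ℝ)/2) * t := by
    rw [show α + γ = γ + (α-1) + (-(n:ℝ)/2) + ((n:ℝ)/2) + 1 by ring,
      Real.rpow_add ht, Real.rpow_add ht, Real.rpow_add ht, Real.rpow_add ht, Real.rpow_one]
  have key : ε * c2 n α γ * t ^ (α + γ) = Lo * (Real.sqrt (t/4) ^ n * vpi n * (t/4)) := by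
    rw [hLodef, hs4, h4pit, ht4γ, hpow]
    unfold c2
    ring
  have hpt : ∀ w ∈ A, ENNReal.ofReal Lo ≤
      ENNReal.ofReal (Phi n α (x - w.1) (t - w.2) * fct n ε γ w) := by
    rintro ⟨ξ, τ⟩ ⟨hξ, hτ⟩
    simp only [Set.mem_Ioo] at hτ
    rw [mem_ball_zero_iff] at hξ
    have hξ2 : ‖ξ‖ ^ 2 < t/4 := (Real.lt_sqrt (norm_nonneg _)).mp hξ
    have hτ0 : 0 < τ := lt_trans ht4 hτ.1
    have hs0 : 0 < t - τ := by linarith [hτ.2]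
    have hs1 : t/2 ≤ t - τ := by linarith [hτ.2]
    have hs2 : t - τ ≤ t := by linarith
    apply ENNReal.ofReal_le_ofReal
    have hfw : fct n ε γ (ξ, τ) = ε * τ ^ γ := by
      simp only [fct]
      rw [if_pos ⟨hτ0, lt_trans hξ2 hτ.1⟩]
    have hPhi : Phi n α (x - ξ) (t - τ) = (t-τ)^(α-1)/Real.Gamma α *
        (4*Real.pi*(t-τ))^(-(n:ℝ)/2) * Real.exp (-‖x-ξ‖^2/(4*(t-τ))) := by
      simp only [Phi]
      rw [if_pos hs0]
    rw [hfw, hPhi, hLodef]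
    have g1 : t^(α-1) * mal α / Real.Gamma α ≤ (t-τ)^(α-1)/Real.Gamma α := by
      rw [div_le_div_iff_of_pos_right hGa]
      rcases le_total 1 α with h1 | h1
      · have step1 : t^(α-1) * mal α ≤ t^(α-1) * (2:ℝ)^(1-α) :=
          mul_le_mul_of_nonneg_left (min_le_left _ _) (Real.rpow_nonneg ht.le _)
        refine step1.trans ?_
        have heq : t^(α-1) * (2:ℝ)^(1-α) = (t/2)^(α-1) := by
          rw [Real.div_rpow ht.le (by norm_num : (0:ℝ) ≤ 2),
            show (1-α) = -(α-1) by ring, Real.rpow_neg (by norm_num : (0:ℝ) ≤ 2),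
            div_eq_mul_inv]
        rw [heq]
        exact Real.rpow_le_rpow (by linarith) hs1 (by linarith)
      · calc t^(α-1) * mal α ≤ t^(α-1) * 1 :=
              mul_le_mul_of_nonneg_left (min_le_right _ _) (Real.rpow_nonneg ht.le _)
          _ = t^(α-1) := mul_one _
          _ ≤ (t-τ)^(α-1) := Real.rpow_le_rpow_of_nonpos hs0 hs2 (by linarith)
    have hnn : (0:ℝ) ≤ (n:ℝ) := Nat.cast_nonneg n
    have g2 : (4*Real.pi*t) ^ (-(n:ℝ)/2) ≤ (4*Real.pi*(t-τ)) ^ (-(n:ℝ)/2) := by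
      refine Real.rpow_le_rpow_of_nonpos (by positivity) ?_ (by linarith)
      nlinarith [Real.pi_pos]
    have g3 : Real.exp (-(9/8)) ≤ Real.exp (-‖x-ξ‖^2/(4*(t-τ))) := by
      rw [Real.exp_le_exp]
      have hb : ‖x - ξ‖^2/(4*(t-τ)) ≤ 9/8 := by
        rw [div_le_iff₀ (by linarith : (0:ℝ) < 4*(t-τ))]
        have hx' : ‖x‖ < Real.sqrt t := (Real.lt_sqrt (norm_nonneg _)).mpr hz
        have hsq4 : Real.sqrt (t/4) = Real.sqrt t / 2 := by
          rw [Real.sqrt_div ht.le, show Real.sqrt 4 = 2 by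
            rw [show (4:ℝ) = 2^2 by norm_num, Real.sqrt_sq (by norm_num : (0:ℝ) ≤ 2)]]
        have hξ' : ‖ξ‖ < Real.sqrt t / 2 := hsq4 ▸ hξ
        have htri : ‖x - ξ‖ ≤ ‖x‖ + ‖ξ‖ := norm_sub_le _ _
        have hst : Real.sqrt t ^ 2 = t := Real.sq_sqrt ht.le
        have h32 : ‖x - ξ‖ ≤ 3/2 * Real.sqrt t := by linarith
        have hsq : ‖x - ξ‖^2 ≤ (3/2 * Real.sqrt t)^2 :=
          pow_le_pow_left₀ (norm_nonneg _) h32 2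
        nlinarith [hsq, hst, hs1]
      rw [neg_div]
      linarith
    have g4 : ε * (t/4)^γ ≤ ε * τ^γ :=
      mul_le_mul_of_nonneg_left (Real.rpow_le_rpow ht4.le hτ.1.le hγ.le) hε
    have n2 : (0:ℝ) ≤ (4*Real.pi*t)^(-(n:ℝ)/2) := Real.rpow_nonneg (by positivity) _
    have n2' : (0:ℝ) ≤ (t-τ)^(α-1)/Real.Gamma α :=
      div_nonneg (Real.rpow_nonneg hs0.le _) hGa.le
    have n3' : (0:ℝ) ≤ (t-τ)^(α-1)/Real.Gamma α * (4*Real.pi*(t-τ))^(-(n:ℝ)/2) :=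
      mul_nonneg n2' (Real.rpow_nonneg (by positivity) _)
    refine mul_le_mul (mul_le_mul (mul_le_mul g1 g2 n2 n2') g3 (Real.exp_pos _).le n3') g4
      (mul_nonneg hε (Real.rpow_nonneg ht4.le _)) ?_
    exact mul_nonneg n3' (Real.exp_pos _).le
  calc ENNReal.ofReal (ε * c2 n α γ * t ^ (α + γ))
      = ENNReal.ofReal Lo * volume A := by
        rw [key, ENNReal.ofReal_mul hLo_nonneg, hvol]
    _ = ∫⁻ _ in A, ENNReal.ofReal Lo := (setLIntegral_const A _).symm
    _ ≤ ∫⁻ w in A, ENNReal.ofReal (Phi n α (x - w.1) (t - w.2) * fct n ε γ w) :=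
        setLIntegral_mono' hAmeas hpt
    _ ≤ JE n α (fct n ε γ) (x, t) := by
        rw [JE]
        exact setLIntegral_le_lintegral A _
end Aux

theorem stmt11 (n : ℕ) (hn : 1 ≤ n) (p K lam α : ℝ)
    (hp : 1 ≤ p) (hK : 0 < K) (hlam0 : 0 < lam) (hlam1 : lam < 1) (hα : 0 < α) :
    ∃ N : ℝ, 0 < N ∧ ∃ f : EuclideanSpace ℝ (Fin n) × ℝ → ℝ,
      Measurable f ∧ (∀ z, 0 ≤ f z) ∧ MemXp n (ENNReal.ofReal p) f ∧
      (∀ᵐ z : EuclideanSpace ℝ (Fin n) × ℝ,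
        ENNReal.ofReal (f z) ≤ ENNReal.ofReal K * JE n α f z ^ lam) ∧
      (∀ᵐ z : EuclideanSpace ℝ (Fin n) × ℝ, z.2 < 0 → f z = 0) ∧
      (∀ z : EuclideanSpace ℝ (Fin n) × ℝ, ‖z.1‖ ^ 2 < z.2 →
        K ^ (1 / (1 - lam)) * (N * z.2 ^ α) ^ (lam / (1 - lam)) ≤ f z) ∧
      (∀ z : EuclideanSpace ℝ (Fin n) × ℝ, ‖z.1‖ ^ 2 < z.2 →
        ENNReal.ofReal (K ^ (1 / (1 - lam)) * (N * z.2 ^ α) ^ (1 / (1 - lam))) ≤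
          JE n α f z) := by
  have h1l : (0:ℝ) < 1 - lam := by linarith
  have h1l' : (1:ℝ) - lam ≠ 0 := ne_of_gt h1l
  set γ : ℝ := α * lam / (1 - lam) with hγdef
  have hγ : 0 < γ := by positivity
  set N : ℝ := c2 n α γ with hNdef
  have hN : 0 < N := c2_pos n γ hα
  set ε : ℝ := K ^ (1 / (1 - lam)) * N ^ (lam / (1 - lam)) with hεdef
  have hε : 0 < ε := by positivity
  -- the key real identity
  have keyR : ∀ t : ℝ, 0 < t → K * (ε * N * t ^ (α + γ)) ^ lam = ε * t ^ γ := by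
    intro t ht
    rw [Real.mul_rpow (by positivity) (Real.rpow_nonneg ht.le _),
      Real.mul_rpow hε.le hN.le, ← Real.rpow_mul ht.le,
      show (α + γ) * lam = γ by rw [hγdef]; field_simp; ring]
    have hKey : K * (ε ^ lam * N ^ lam) = ε := by
      rw [hεdef, Real.mul_rpow (by positivity) (by positivity),
        ← Real.rpow_mul hK.le, ← Real.rpow_mul hN.le]
      have e1 : K * K ^ (1 / (1 - lam) * lam) = K ^ (1 / (1 - lam)) := by
        nth_rewrite 1 [← Real.rpow_one K]
        rw [← Real.rpow_add hK, show 1 + 1 / (1 - lam) * lam = 1 / (1 - lam) by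
          field_simp; ring]
      have e2 : N ^ (lam / (1 - lam) * lam) * N ^ lam = N ^ (lam / (1 - lam)) := by
        rw [← Real.rpow_add hN, show lam / (1 - lam) * lam + lam = lam / (1 - lam) by
          field_simp; ring]
      calc K * (K ^ (1 / (1 - lam) * lam) * N ^ (lam / (1 - lam) * lam) * N ^ lam)
          = (K * K ^ (1 / (1 - lam) * lam)) * (N ^ (lam / (1 - lam) * lam) * N ^ lam) := by
            ring
        _ = K ^ (1 / (1 - lam)) * N ^ (lam / (1 - lam)) := by rw [e1, e2]
    calc K * (ε ^ lam * N ^ lam * t ^ γ) = K * (ε ^ lam * N ^ lam) * t ^ γ := by ring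
      _ = ε * t ^ γ := by rw [hKey]
  refine ⟨N, hN, fct n ε γ, fct_meas n ε hγ.le, fct_nonneg n hε.le γ, ?_, ?_, ?_, ?_, ?_⟩
  · -- MemXp
    intro T
    have hslab : MeasurableSet {z : EuclideanSpace ℝ (Fin n) × ℝ | z.2 < T} :=
      measurableSet_lt measurable_snd measurable_const
    set T' : ℝ := max T 0 with hT'def
    have hT'0 : 0 ≤ T' := le_max_right T 0
    set S : Set (EuclideanSpace ℝ (Fin n) × ℝ) :=
      (Metric.ball (0 : EuclideanSpace ℝ (Fin n)) (Real.sqrt T')) ×ˢ Set.Ioo (0:ℝ) T'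
      with hSdef
    set C : ℝ := ε * T' ^ γ with hCdef
    have hC : 0 ≤ C := mul_nonneg hε.le (Real.rpow_nonneg hT'0 _)
    have hSmeas : MeasurableSet S := measurableSet_ball.prod measurableSet_Ioo
    have hSvol : volume S ≠ ⊤ := by
      rw [hSdef, MeasureTheory.Measure.volume_eq_prod, MeasureTheory.Measure.prod_prod,
        Real.volume_Ioo]
      exact ENNReal.mul_ne_top measure_ball_lt_top.ne ENNReal.ofReal_ne_top
    have hres : (volume.restrict {z : EuclideanSpace ℝ (Fin n) × ℝ | z.2 < T}) S ≠ ⊤ :=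
      ne_top_of_le_ne_top hSvol (Measure.restrict_apply_le _ _)
    have hind : MemLp (S.indicator fun _ => C) (ENNReal.ofReal p)
        (volume.restrict {z : EuclideanSpace ℝ (Fin n) × ℝ | z.2 < T}) :=
      memLp_indicator_const _ hSmeas C (Or.inr hres)
    refine hind.of_le (fct_meas n ε hγ.le).aestronglyMeasurable ?_
    rw [ae_restrict_iff' hslab]
    refine ae_of_all _ fun z hz => ?_
    by_cases hcond : 0 < z.2 ∧ ‖z.1‖ ^ 2 < z.2
    · have hzT : z.2 ≤ T' := le_trans (le_of_lt hz) (le_max_left T 0)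
      have hzS : z ∈ S := by
        refine ⟨?_, hcond.1, lt_of_lt_of_le hz (le_max_left T 0)⟩
        rw [mem_ball_zero_iff]
        exact (Real.lt_sqrt (norm_nonneg _)).mpr (lt_of_lt_of_le hcond.2 hzT)
      rw [Set.indicator_of_mem hzS]
      have hfz : fct n ε γ z = ε * z.2 ^ γ := by
        simp only [fct]; rw [if_pos hcond]
      rw [hfz, Real.norm_of_nonneg (mul_nonneg hε.le (Real.rpow_nonneg hcond.1.le _)),
        Real.norm_of_nonneg hC]
      exact mul_le_mul_of_nonneg_left (Real.rpow_le_rpow hcond.1.le hzT hγ.le) hε.le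
    · have hfz : fct n ε γ z = 0 := by
        simp only [fct]; rw [if_neg hcond]
      rw [hfz, norm_zero]
      exact norm_nonneg _
  · -- a.e. inequality f ≤ K (JE f)^lam
    refine ae_of_all _ fun z => ?_
    by_cases hcond : 0 < z.2 ∧ ‖z.1‖ ^ 2 < z.2
    · have hfz : fct n ε γ z = ε * z.2 ^ γ := by
        simp only [fct]; rw [if_pos hcond]
      have hle := JE_lower n hn α γ ε hα hγ hε.le z hcond.2
      have hM : (0:ℝ) ≤ ε * c2 n α γ * z.2 ^ (α + γ) :=
        mul_nonneg (mul_nonneg hε.le (c2_pos n γ hα).le) (Real.rpow_nonneg hcond.1.le _)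
      calc ENNReal.ofReal (fct n ε γ z)
          = ENNReal.ofReal (K * (ε * c2 n α γ * z.2 ^ (α + γ)) ^ lam) := by
            rw [hfz, ← keyR z.2 hcond.1, hNdef]
        _ = ENNReal.ofReal K *
            ENNReal.ofReal ((ε * c2 n α γ * z.2 ^ (α + γ)) ^ lam) := ENNReal.ofReal_mul hK.le
        _ = ENNReal.ofReal K *
            ENNReal.ofReal (ε * c2 n α γ * z.2 ^ (α + γ)) ^ lam := by
            rw [ENNReal.ofReal_rpow_of_nonneg hM hlam0.le]
        _ ≤ ENNReal.ofReal K * JE n α (fct n ε γ) z ^ lam :=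
            mul_le_mul_right (ENNReal.rpow_le_rpow hle hlam0.le) _
    · have hfz : fct n ε γ z = 0 := by
        simp only [fct]; rw [if_neg hcond]
      rw [hfz, ENNReal.ofReal_zero]
      exact zero_le
  · -- vanishing for negative times
    refine ae_of_all _ fun z hz => ?_
    have hcond : ¬(0 < z.2 ∧ ‖z.1‖ ^ 2 < z.2) := by
      rintro ⟨h1, _⟩; linarith
    simp only [fct]; rw [if_neg hcond]
  · -- pointwise lower bound for f
    intro z hz
    have ht : 0 < z.2 := lt_of_le_of_lt (by positivity) hz
    have hfz : fct n ε γ z = ε * z.2 ^ γ := by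
      simp only [fct]; rw [if_pos ⟨ht, hz⟩]
    have hid : K ^ (1 / (1 - lam)) * (N * z.2 ^ α) ^ (lam / (1 - lam)) = ε * z.2 ^ γ := by
      rw [Real.mul_rpow hN.le (Real.rpow_nonneg ht.le _), ← Real.rpow_mul ht.le,
        show α * (lam / (1 - lam)) = γ by rw [hγdef]; ring, hεdef]
      ring
    rw [hid, hfz]
  · -- lower bound for JE
    intro z hz
    have ht : 0 < z.2 := lt_of_le_of_lt (by positivity) hz
    have hid : K ^ (1 / (1 - lam)) * (N * z.2 ^ α) ^ (1 / (1 - lam)) =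
        ε * c2 n α γ * z.2 ^ (α + γ) := by
      rw [Real.mul_rpow hN.le (Real.rpow_nonneg ht.le _), ← Real.rpow_mul ht.le,
        show α * (1 / (1 - lam)) = α + γ by rw [hγdef]; field_simp; ring,
        show N ^ (1 / (1 - lam)) = N ^ (lam / (1 - lam)) * N by
          rw [show (1:ℝ) / (1 - lam) = lam / (1 - lam) + 1 by field_simp; ring,
            Real.rpow_add hN, Real.rpow_one]
        , hεdef, hNdef]
      ring
    rw [hid]
    exact JE_lower n hn α γ ε hα hγ hε.le z hz
end

section
/- For all α, β > 0 and all (x,t) ∈ ℝⁿ×ℝ, the convolution identity Φ_{α+β}(x,t) = ∬_{ℝⁿ×ℝ} Φ_α(x−ξ, t−τ)·Φ_β(ξ,τ) dξ dτ holds (in particular the convolution integral is finite for every (x,t)). -/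
open MeasureTheory Real ENNReal

noncomputable section Helpers

variable {n : ℕ}

local notation "E" => EuclideanSpace ℝ (Fin n)

lemma integrable_gauss {b : ℝ} (hb : 0 < b) :
    Integrable fun v : EuclideanSpace ℝ (Fin n) => rexp (-b * ‖v‖ ^ 2) := by
  have h := (GaussianFourier.integrable_cexp_neg_mul_sq_norm_add (V := EuclideanSpace ℝ (Fin n))
      (b := (b : ℂ)) (by simpa using hb) 0 0).re
  simp only [zero_mul, add_zero] at h
  convert h using 2 with v
  rw [show -(b : ℂ) * (‖v‖ : ℂ) ^ 2 = ((-b * ‖v‖ ^ 2 : ℝ) : ℂ) by push_cast; ring,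
    ← Complex.exp_ofReal_re]
  rfl

lemma sq_complete {a b : ℝ} (hab : 0 < a + b) (x ξ : E) :
    a * ‖x - ξ‖ ^ 2 + b * ‖ξ‖ ^ 2 =
      (a + b) * ‖ξ - (a / (a + b)) • x‖ ^ 2 + a * b / (a + b) * ‖x‖ ^ 2 := by
  have h1 : ‖x - ξ‖ ^ 2 = ‖x‖ ^ 2 - 2 * inner ℝ x ξ + ‖ξ‖ ^ 2 := norm_sub_sq_real x ξ
  have h2 : ‖ξ - (a / (a + b)) • x‖ ^ 2
      = ‖ξ‖ ^ 2 - 2 * ((a / (a + b)) * inner ℝ x ξ) + (a / (a + b)) ^ 2 * ‖x‖ ^ 2 := by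
    rw [norm_sub_sq_real, real_inner_smul_right, real_inner_comm, norm_smul]
    rw [mul_pow, Real.norm_eq_abs, sq_abs]
  rw [h1, h2]
  field_simp
  ring

lemma const_alg {s τ : ℝ} (hs : 0 < s) (hτ : 0 < τ) :
    (4 * π * s) ^ (-(n : ℝ) / 2) * (4 * π * τ) ^ (-(n : ℝ) / 2) *
      (4 * π * s * τ / (s + τ)) ^ ((n : ℝ) / 2) = (4 * π * (s + τ)) ^ (-(n : ℝ) / 2) := by
  have hπ := Real.pi_pos
  have e1 : (-(n : ℝ) / 2) = -((n : ℝ)/2) := by ring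
  rw [e1, Real.rpow_neg (by positivity), Real.rpow_neg (by positivity),
    Real.rpow_neg (by positivity), ← Real.inv_rpow (by positivity),
    ← Real.inv_rpow (by positivity), ← Real.inv_rpow (by positivity),
    ← Real.mul_rpow (by positivity) (by positivity),
    ← Real.mul_rpow (by positivity) (by positivity)]
  congr 1
  field_simp

lemma gauss_conv {s τ : ℝ} (hs : 0 < s) (hτ : 0 < τ) (x : E) :
    (Integrable fun ξ : E => rexp (-‖x - ξ‖ ^ 2 / (4 * s)) * rexp (-‖ξ‖ ^ 2 / (4 * τ))) ∧
    ∫ ξ : E, rexp (-‖x - ξ‖ ^ 2 / (4 * s)) * rexp (-‖ξ‖ ^ 2 / (4 * τ))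
      = (4 * π * s * τ / (s + τ)) ^ ((n : ℝ) / 2) * rexp (-‖x‖ ^ 2 / (4 * (s + τ))) := by
  set a := 1 / (4 * s) with ha
  set b := 1 / (4 * τ) with hb
  have hap : 0 < a := by positivity
  have hbp : 0 < b := by positivity
  have hab : 0 < a + b := by positivity
  have key : ∀ ξ : E, rexp (-‖x - ξ‖ ^ 2 / (4 * s)) * rexp (-‖ξ‖ ^ 2 / (4 * τ))
      = rexp (-(a + b) * ‖ξ - (a / (a + b)) • x‖ ^ 2) * rexp (-(a * b / (a + b)) * ‖x‖ ^ 2) := by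
    intro ξ
    rw [← Real.exp_add, ← Real.exp_add]
    congr 1
    have := sq_complete (a := a) (b := b) hab x ξ
    linear_combination -this
  have hint : Integrable fun ξ : E => rexp (-(a + b) * ‖ξ - (a / (a + b)) • x‖ ^ 2) :=
    (integrable_gauss hab).comp_sub_right ((a / (a + b)) • x)
  constructor
  · simp_rw [key]
    exact hint.mul_const _
  · simp_rw [key]
    rw [integral_mul_const, integral_sub_right_eq_self
      (fun ξ : E => rexp (-(a + b) * ‖ξ‖ ^ 2)) ((a / (a + b)) • x),
      GaussianFourier.integral_rexp_neg_mul_sq_norm hab]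
    have hd : Module.finrank ℝ (EuclideanSpace ℝ (Fin n)) = n := finrank_euclideanSpace_fin
    rw [hd]
    have h1 : π / (a + b) = 4 * π * s * τ / (s + τ) := by
      rw [ha, hb]; field_simp; ring
    have h2 : -(a * b / (a + b)) * ‖x‖ ^ 2 = -‖x‖ ^ 2 / (4 * (s + τ)) := by
      rw [ha, hb]; field_simp
      ring
    rw [h1, h2]

lemma betaInt {a b t : ℝ} (ha : 0 < a) (hb : 0 < b) (ht : 0 < t) :
    IntervalIntegrable (fun τ => (t - τ) ^ (a - 1) * τ ^ (b - 1)) volume 0 t := by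
  apply IntervalIntegrable.trans (b := t / 2)
  · apply IntervalIntegrable.continuousOn_mul (intervalIntegral.intervalIntegrable_rpow' (by linarith))
    apply ContinuousOn.rpow_const (by fun_prop)
    intro y hy
    rw [Set.uIcc_of_le (by linarith)] at hy
    left
    have := hy.2
    intro h; linarith [this]
  · apply IntervalIntegrable.mul_continuousOn
    · have h0 : IntervalIntegrable (fun τ : ℝ => τ ^ (a - 1)) volume 0 (t / 2) :=
        intervalIntegral.intervalIntegrable_rpow' (by linarith)
      have := h0.comp_sub_left t
      simpa [show t - t/2 = t/2 from by ring] using this.symm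
    · apply ContinuousOn.rpow_const (by fun_prop)
      intro y hy
      rw [Set.uIcc_of_le (by linarith)] at hy
      left
      have := hy.1
      intro h; linarith [this]

lemma betaVal {a b t : ℝ} (ha : 0 < a) (hb : 0 < b) (ht : 0 < t) :
    ∫ τ in (0 : ℝ)..t, (t - τ) ^ (a - 1) * τ ^ (b - 1)
      = Real.Gamma a * Real.Gamma b / Real.Gamma (a + b) * t ^ (a + b - 1) := by
  have h1 := Complex.betaIntegral_scaled (b : ℂ) (a : ℂ) ht
  have h2 : Complex.Gamma (b + a) ≠ 0 := by
    apply Complex.Gamma_ne_zero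
    intro m
    intro h
    have : (0:ℝ) < b + a := by linarith
    have hre : ((b : ℂ) + a).re = b + a := by simp
    rw [h] at hre
    simp at hre
    nlinarith [hre, (Nat.cast_nonneg m : (0:ℝ) ≤ m)]
  have h3 := Complex.Gamma_mul_Gamma_eq_betaIntegral
      (s := (b : ℂ)) (t := (a : ℂ)) (by simpa using hb) (by simpa using ha)
  have hB : Complex.betaIntegral (b : ℂ) (a : ℂ)
      = Complex.Gamma b * Complex.Gamma a / Complex.Gamma (b + a) := by
    rw [eq_div_iff h2, h3]; ring
  have heq : Set.EqOn (fun τ : ℝ => ((((t - τ) ^ (a - 1) * τ ^ (b - 1) : ℝ)) : ℂ))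
      (fun τ : ℝ => (τ : ℂ) ^ ((b : ℂ) - 1) * ((t : ℂ) - τ) ^ ((a : ℂ) - 1))
      (Set.uIcc 0 t) := by
    intro τ hτ
    rw [Set.uIcc_of_le ht.le] at hτ
    simp only
    rw [Complex.ofReal_mul, Complex.ofReal_cpow (by linarith [hτ.2]),
      Complex.ofReal_cpow (by linarith [hτ.1])]
    push_cast
    ring
  have h4 : ((∫ τ in (0 : ℝ)..t, (t - τ) ^ (a - 1) * τ ^ (b - 1) : ℝ) : ℂ)
      = (t : ℂ) ^ ((b : ℂ) + a - 1) * Complex.betaIntegral b a := by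
    rw [← intervalIntegral.integral_ofReal, intervalIntegral.integral_congr heq, ← h1]
  rw [hB] at h4
  have h5 : (t : ℂ) ^ ((b : ℂ) + a - 1) = ((t ^ (a + b - 1) : ℝ) : ℂ) := by
    rw [Complex.ofReal_cpow ht.le]
    push_cast
    ring_nf
  rw [h5, Complex.Gamma_ofReal, Complex.Gamma_ofReal, show ((b:ℂ) + a) = ((b + a : ℝ) : ℂ) by push_cast; ring, Complex.Gamma_ofReal] at h4
  rw [← Complex.ofReal_inj]
  push_cast at h4 ⊢
  rw [h4]
  ring

lemma phi_nonneg {α : ℝ} (hα : 0 < α) (x : E) (t : ℝ) : 0 ≤ Phi n α x t := by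
  unfold Phi
  split
  · have := Real.Gamma_pos_of_pos hα
    positivity
  · exact le_refl 0

lemma measurable_phi (n : ℕ) (α : ℝ) : Measurable fun z : EuclideanSpace ℝ (Fin n) × ℝ =>
    Phi n α z.1 z.2 := by
  unfold Phi
  apply Measurable.ite (measurableSet_lt measurable_const measurable_snd) _ measurable_const
  measurability

lemma spatial {α β : ℝ} (hα : 0 < α) (hβ : 0 < β) (x : E) {t τ : ℝ} (hτ : 0 < τ) (hτt : τ < t) :
    (Integrable fun ξ : E => Phi n α (x - ξ) (t - τ) * Phi n β ξ τ) ∧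
    ∫ ξ : E, Phi n α (x - ξ) (t - τ) * Phi n β ξ τ
      = (t - τ) ^ (α - 1) * τ ^ (β - 1) / (Real.Gamma α * Real.Gamma β) *
        ((4 * π * t) ^ (-(n : ℝ) / 2) * rexp (-‖x‖ ^ 2 / (4 * t))) := by
  have hs : 0 < t - τ := by linarith
  have key : ∀ ξ : E, Phi n α (x - ξ) (t - τ) * Phi n β ξ τ
      = ((t - τ) ^ (α - 1) / Real.Gamma α * (4 * π * (t - τ)) ^ (-(n : ℝ) / 2) *
          (τ ^ (β - 1) / Real.Gamma β * (4 * π * τ) ^ (-(n : ℝ) / 2))) *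
        (rexp (-‖x - ξ‖ ^ 2 / (4 * (t - τ))) * rexp (-‖ξ‖ ^ 2 / (4 * τ))) := by
    intro ξ
    unfold Phi
    rw [if_pos hs, if_pos hτ]
    ring
  obtain ⟨hint, hval⟩ := gauss_conv (n := n) hs hτ x
  constructor
  · simp_rw [key]
    exact hint.const_mul _
  · simp_rw [key]
    rw [integral_const_mul, hval]
    have hst : t - τ + τ = t := by ring
    rw [hst]
    have := const_alg (n := n) hs hτ
    rw [hst] at this
    linear_combination ((t - τ) ^ (α - 1) * τ ^ (β - 1) / (Real.Gamma α * Real.Gamma β) *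
      rexp (-‖x‖ ^ 2 / (4 * t))) * this


end Helpers

theorem stmt14 (n : ℕ) (hn : 1 ≤ n) (α β : ℝ) (hα : 0 < α) (hβ : 0 < β)
    (x : EuclideanSpace ℝ (Fin n)) (t : ℝ) :
    Integrable (fun w : EuclideanSpace ℝ (Fin n) × ℝ =>
      Phi n α (x - w.1) (t - w.2) * Phi n β w.1 w.2) ∧
    Phi n (α + β) x t =
      ∫ w : EuclideanSpace ℝ (Fin n) × ℝ,
        Phi n α (x - w.1) (t - w.2) * Phi n β w.1 w.2 := by
  by_cases ht : 0 < t
  · -- main case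
    set F : EuclideanSpace ℝ (Fin n) × ℝ → ℝ :=
      fun w => Phi n α (x - w.1) (t - w.2) * Phi n β w.1 w.2 with hF
    have hm1 : Measurable fun w : EuclideanSpace ℝ (Fin n) × ℝ =>
        Phi n α (x - w.1) (t - w.2) :=
      (measurable_phi n α).comp
        ((measurable_const.sub measurable_fst).prodMk (measurable_const.sub measurable_snd))
    have hmF : Measurable F := hm1.mul (measurable_phi n β)
    have hnn : ∀ w, 0 ≤ F w := fun w =>
      mul_nonneg (phi_nonneg hα _ _) (phi_nonneg hβ _ _)
    set K : ℝ := (4 * π * t) ^ (-(n : ℝ) / 2) * rexp (-‖x‖ ^ 2 / (4 * t)) with hK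
    set c : ℝ → ℝ := fun τ =>
      (t - τ) ^ (α - 1) * τ ^ (β - 1) / (Real.Gamma α * Real.Gamma β) * K with hc
    have hz : ∀ τ : ℝ, τ ∉ Set.Ioo 0 t → (fun ξ : EuclideanSpace ℝ (Fin n) => F (ξ, τ)) = 0 := by
      intro τ hτ
      funext ξ
      simp only [hF, Set.mem_Ioo, not_and, not_lt] at hτ ⊢
      by_cases h0 : 0 < τ
      · have : ¬ (0 < t - τ) := by have := hτ h0; simp; linarith
        rw [show Phi n α (x - ξ) (t - τ) = 0 from by unfold Phi; rw [if_neg this], zero_mul]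
        rfl
      · rw [show Phi n β ξ τ = 0 from by unfold Phi; rw [if_neg h0], mul_zero]
        rfl
    have hAint : ∀ τ : ℝ, Integrable (fun ξ : EuclideanSpace ℝ (Fin n) => F (ξ, τ)) := by
      intro τ
      by_cases hmem : τ ∈ Set.Ioo 0 t
      · exact (spatial hα hβ x hmem.1 hmem.2).1
      · rw [hz τ hmem]; exact integrable_zero _ _ _
    have hI : ∀ τ : ℝ, (∫ ξ : EuclideanSpace ℝ (Fin n), F (ξ, τ))
        = Set.indicator (Set.Ioo 0 t) c τ := by
      intro τ
      by_cases hmem : τ ∈ Set.Ioo 0 t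
      · rw [Set.indicator_of_mem hmem, hc]
        exact (spatial hα hβ x hmem.1 hmem.2).2
      · rw [Set.indicator_of_notMem hmem, hz τ hmem]
        simp
    have hbeta := betaInt hα hβ ht
    have hCc : IntegrableOn c (Set.Ioo 0 t) := by
      have h1 : IntegrableOn (fun τ => (t - τ) ^ (α - 1) * τ ^ (β - 1)) (Set.Ioc 0 t) := by
        have := (intervalIntegrable_iff).1 hbeta
        rwa [Set.uIoc_of_le ht.le] at this
      have h2 := (h1.mono_set Set.Ioo_subset_Ioc_self).mul_const
        (K / (Real.Gamma α * Real.Gamma β))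
      apply MeasureTheory.IntegrableOn.congr_fun h2 _ measurableSet_Ioo
      intro τ _
      simp only [hc]
      ring
    have hCind : Integrable (Set.indicator (Set.Ioo 0 t) c) := by
      rwa [integrable_indicator_iff measurableSet_Ioo]
    have hnorm : (fun τ => ∫ ξ : EuclideanSpace ℝ (Fin n), ‖F (ξ, τ)‖)
        = Set.indicator (Set.Ioo 0 t) c := by
      funext τ
      rw [show (fun ξ : EuclideanSpace ℝ (Fin n) => ‖F (ξ, τ)‖)
          = fun ξ => F (ξ, τ) from funext fun ξ => Real.norm_of_nonneg (hnn _)]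
      exact hI τ
    have hFi : Integrable F := by
      rw [MeasureTheory.Measure.volume_eq_prod]
      refine (integrable_prod_iff' ?_).2 ⟨Filter.Eventually.of_forall hAint, ?_⟩
      · rw [← MeasureTheory.Measure.volume_eq_prod]; exact hmF.aestronglyMeasurable
      · rw [hnorm]; exact hCind
    refine ⟨hFi, ?_⟩
    have hswap : (∫ w, F w)
        = ∫ τ : ℝ, ∫ ξ : EuclideanSpace ℝ (Fin n), F (ξ, τ) := by
      rw [MeasureTheory.Measure.volume_eq_prod]
      exact integral_prod_symm F (by rwa [MeasureTheory.Measure.volume_eq_prod] at hFi)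
    rw [hswap]
    simp_rw [hI]
    rw [integral_indicator measurableSet_Ioo, ← integral_Ioc_eq_integral_Ioo,
      ← intervalIntegral.integral_of_le ht.le]
    have hval : ∫ τ in (0:ℝ)..t, c τ
        = (Real.Gamma α * Real.Gamma β / Real.Gamma (α + β) * t ^ (α + β - 1)) *
          (K / (Real.Gamma α * Real.Gamma β)) := by
      have : ∀ τ : ℝ, c τ = (t - τ) ^ (α - 1) * τ ^ (β - 1) *
          (K / (Real.Gamma α * Real.Gamma β)) := by intro τ; simp only [hc]; ring
      simp_rw [this]
      rw [intervalIntegral.integral_mul_const, betaVal hα hβ ht]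
    rw [hval]
    unfold Phi
    rw [if_pos ht, hK]
    have hga := (Real.Gamma_pos_of_pos hα).ne'
    have hgb := (Real.Gamma_pos_of_pos hβ).ne'
    field_simp
  · -- t ≤ 0 : everything vanishes
    have hFz : (fun w : EuclideanSpace ℝ (Fin n) × ℝ =>
        Phi n α (x - w.1) (t - w.2) * Phi n β w.1 w.2) = 0 := by
      funext w
      by_cases h0 : 0 < w.2
      · have : ¬ (0 < t - w.2) := by simp; nlinarith [not_lt.1 ht]
        rw [show Phi n α (x - w.1) (t - w.2) = 0 from by unfold Phi; rw [if_neg this], zero_mul]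
        rfl
      · rw [show Phi n β w.1 w.2 = 0 from by unfold Phi; rw [if_neg h0], mul_zero]
        rfl
    rw [hFz]
    refine ⟨integrable_zero _ _ _, ?_⟩
    rw [integral_zero']
    unfold Phi
    rw [if_neg ht]
end

section
/- There exists a constant C = C(n) > 0 such that for all x ∈ ℝⁿ and all t, τ ∈ (0,∞) satisfying |x|² < t and t/4 < τ < 3t/4, one has ∫_{{ξ ∈ ℝⁿ : |ξ|² < τ}} Φ_1(x−ξ, t−τ) dξ ≥ C. -/
open MeasureTheory Real ENNReal

theorem stmt19 (n : ℕ) (hn : 1 ≤ n) :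
    ∃ C : ℝ, 0 < C ∧ ∀ (x : EuclideanSpace ℝ (Fin n)) (t τ : ℝ),
      0 < t → 0 < τ → ‖x‖ ^ 2 < t → t / 4 < τ → τ < 3 * t / 4 →
      C ≤ ∫ ξ in {ξ : EuclideanSpace ℝ (Fin n) | ‖ξ‖ ^ 2 < τ},
            Phi n 1 (x - ξ) (t - τ) := by
  have : Nonempty (Fin n) := ⟨⟨0, hn⟩⟩
  have hπ : 0 < Real.pi := Real.pi_pos
  have hΓ : 0 < Real.Gamma ((n : ℝ) / 2 + 1) := Real.Gamma_pos_of_pos (by positivity)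
  refine ⟨(3 * Real.pi) ^ (-(n : ℝ) / 2) * Real.exp (-(9/4)) *
    ((1/2) ^ n * (Real.sqrt Real.pi ^ n / Real.Gamma ((n : ℝ) / 2 + 1))), by positivity, ?_⟩
  intro x t τ ht hτ hx2 h1 h2
  set s : ℝ := t - τ with hs_def
  have hs : 0 < s := by simp only [hs_def]; linarith
  have hs4 : t < 4 * s := by simp only [hs_def]; linarith
  have hs3 : 4 * s < 3 * t := by simp only [hs_def]; linarith
  set S : Set (EuclideanSpace ℝ (Fin n)) := {ξ | ‖ξ‖ ^ 2 < τ} with hS_def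
  have hSball : S = Metric.ball (0 : EuclideanSpace ℝ (Fin n)) (Real.sqrt τ) := by
    ext ξ
    simp [hS_def, Metric.mem_ball, dist_zero_right, Real.lt_sqrt (norm_nonneg ξ)]
  set r : ℝ := Real.sqrt t / 2 with hr_def
  have hr : 0 < r := by positivity
  set B : Set (EuclideanSpace ℝ (Fin n)) := Metric.ball (0 : EuclideanSpace ℝ (Fin n)) r
    with hB_def
  have hBS : B ⊆ S := by
    intro ξ hξ
    simp only [hB_def, Metric.mem_ball, dist_zero_right] at hξ
    have h0 : ‖ξ‖ ^ 2 < r ^ 2 := by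
      apply sq_lt_sq' _ hξ; linarith [norm_nonneg ξ]
    have : r ^ 2 = t / 4 := by
      rw [hr_def, div_pow, Real.sq_sqrt ht.le]; norm_num
    simp only [hS_def, Set.mem_setOf_eq]
    linarith [this ▸ h0]
  -- the kernel as a function of ξ
  set g : EuclideanSpace ℝ (Fin n) → ℝ := fun ξ => Phi n 1 (x - ξ) s with hg_def
  have hgval : ∀ ξ, g ξ = (4 * Real.pi * s) ^ (-(n : ℝ) / 2) *
      Real.exp (-‖x - ξ‖ ^ 2 / (4 * s)) := by
    intro ξ
    simp [hg_def, Phi, if_pos hs, Real.Gamma_one, Real.rpow_natCast]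
  have hg_nonneg : ∀ ξ, 0 ≤ g ξ := fun ξ => by rw [hgval]; positivity
  have hg_cont : Continuous g := by
    have : g = fun ξ => (4 * Real.pi * s) ^ (-(n : ℝ) / 2) *
        Real.exp (-‖x - ξ‖ ^ 2 / (4 * s)) := funext hgval
    rw [this]; fun_prop
  have hSmeas : MeasurableSet S := by rw [hSball]; exact measurableSet_ball
  have hSfin : volume S < ⊤ := by rw [hSball]; exact measure_ball_lt_top
  have hg_int : IntegrableOn g S := by
    have hconst : IntegrableOn (fun _ : EuclideanSpace ℝ (Fin n) =>
        (4 * Real.pi * s) ^ (-(n : ℝ) / 2)) S volume := integrableOn_const hSfin.ne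
    refine hconst.mono' hg_cont.aestronglyMeasurable ?_
    filter_upwards with ξ
    rw [Real.norm_of_nonneg (hg_nonneg ξ), hgval]
    calc (4 * Real.pi * s) ^ (-(n : ℝ) / 2) * Real.exp (-‖x - ξ‖ ^ 2 / (4 * s))
        ≤ (4 * Real.pi * s) ^ (-(n : ℝ) / 2) * 1 := by
          apply mul_le_mul_of_nonneg_left _ (by positivity)
          rw [Real.exp_le_one_iff]
          apply div_nonpos_of_nonpos_of_nonneg (neg_nonpos_of_nonneg (by positivity)) (by positivity)
      _ = (4 * Real.pi * s) ^ (-(n : ℝ) / 2) := mul_one _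
  -- pointwise lower bound on B
  have hlow : ∀ ξ ∈ B, (3 * Real.pi * t) ^ (-(n : ℝ) / 2) * Real.exp (-(9/4)) ≤ g ξ := by
    intro ξ hξ
    simp only [hB_def, Metric.mem_ball, dist_zero_right] at hξ
    rw [hgval]
    have hxle : ‖x‖ ≤ Real.sqrt t := by
      rw [show t = Real.sqrt t ^ 2 from (Real.sq_sqrt ht.le).symm] at hx2
      nlinarith [norm_nonneg x, Real.sqrt_nonneg t]
    have hnorm : ‖x - ξ‖ ≤ 3 * Real.sqrt t / 2 := by
      calc ‖x - ξ‖ ≤ ‖x‖ + ‖ξ‖ := norm_sub_le x ξ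
        _ ≤ Real.sqrt t + Real.sqrt t / 2 := by
            apply add_le_add hxle; rw [hr_def] at hξ; linarith
        _ = 3 * Real.sqrt t / 2 := by ring
    have hnorm2 : ‖x - ξ‖ ^ 2 ≤ 9 * t / 4 := by
      have := Real.sq_sqrt ht.le
      nlinarith [norm_nonneg (x - ξ), Real.sqrt_nonneg t]
    apply mul_le_mul
    · apply Real.rpow_le_rpow_of_nonpos (by positivity) (by nlinarith) (by rw [neg_div]; exact neg_nonpos_of_nonneg (by positivity))
    · rw [Real.exp_le_exp]
      rw [neg_div, neg_le_neg_iff]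
      rw [div_le_div_iff₀ (by linarith) (by norm_num)]
      nlinarith
    · positivity
    · positivity
  -- main chain
  have hBint : ∫ ξ in B, ((3 * Real.pi * t) ^ (-(n : ℝ) / 2) * Real.exp (-(9/4))) ≤
      ∫ ξ in B, g ξ := by
    apply setIntegral_mono_on (integrableOn_const measure_ball_lt_top.ne)
      (hg_int.mono_set hBS) measurableSet_ball hlow
  have hmono : ∫ ξ in B, g ξ ≤ ∫ ξ in S, g ξ := by
    apply setIntegral_mono_set hg_int
    · filter_upwards with ξ using hg_nonneg ξ
    · exact Filter.Eventually.of_forall hBS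
  refine le_trans ?_ (hBint.trans hmono)
  rw [setIntegral_const]
  rw [hB_def, measureReal_def, EuclideanSpace.volume_ball]
  rw [ENNReal.toReal_mul, ENNReal.toReal_pow, ENNReal.toReal_ofReal hr.le,
    ENNReal.toReal_ofReal (by positivity)]
  simp only [Fintype.card_fin]
  rw [smul_eq_mul]
  -- now pure algebra with rpow
  have hsq : (Real.sqrt t) ^ n = t ^ ((n : ℝ) / 2) := by
    rw [← Real.rpow_natCast (Real.sqrt t) n, Real.sqrt_eq_rpow, ← Real.rpow_mul ht.le]
    ring_nf
  have hkey : (3 * Real.pi * t) ^ (-(n : ℝ) / 2) * r ^ n = (3 * Real.pi) ^ (-(n : ℝ) / 2) * (1/2) ^ n := by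
    rw [hr_def, div_pow, hsq, Real.mul_rpow (by positivity) ht.le]
    rw [show (-(n : ℝ) / 2) = -((n : ℝ)/2) by ring, Real.rpow_neg ht.le]
    field_simp
    rw [← mul_pow]; norm_num
  apply le_of_eq
  linear_combination
    (-(Real.exp (-(9/4)) * (Real.sqrt Real.pi ^ n / Real.Gamma ((n : ℝ) / 2 + 1)))) * hkey
end
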